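/- Suppose μ is a finite signed Borel measure on ℝⁿ with 0 < μ(ℝⁿ) ≤ |μ|(ℝⁿ) < ∞, where |μ| is the total variation measure. If g has a positive and finite limit at infinity, g(∞) := lim_{r→∞} g(r) with 0 < g(∞) < ∞, then there exists a point x_c ∈ ℝⁿ with V(x_c) = 0. -/

import Mathlib

open MeasureTheory Filter Set Topology

/-- The radial vector field `v(y) = g(|y|) y/|y|` (with `v(0)=0`). -/
noncomputable def radialField {n : ℕ} (g : ℝ → ℝ)
    (y : EuclideanSpace ℝ (Fin n)) : EuclideanSpace ℝ (Fin n) :=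
  (g ‖y‖ / ‖y‖) • y

/-- The vector field `V(x) = ∫ v(x+y) dμ(y)` for a finite signed measure `μ`,
defined via the Jordan decomposition `μ = μ⁺ - μ⁻`. -/
noncomputable def VFieldSigned {n : ℕ} (g : ℝ → ℝ)
    (μ : SignedMeasure (EuclideanSpace ℝ (Fin n)))
    (x : EuclideanSpace ℝ (Fin n)) : EuclideanSpace ℝ (Fin n) :=
  (∫ y, radialField g (x + y) ∂μ.toJordanDecomposition.posPart) -
    (∫ y, radialField g (x + y) ∂μ.toJordanDecomposition.negPart)


section CenterOfMassAux

open Asymptotics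

section RealAux


variable {E : Type*} [NormedAddCommGroup E] [InnerProductSpace ℝ E]

lemma norm_hasFDerivAt {x : E} (hx : x ≠ 0) :
    HasFDerivAt (fun y : E => ‖y‖) (innerSL ℝ ((‖x‖⁻¹ : ℝ) • x)) x := by
  have h2 : (‖x‖ ^ 2 : ℝ) ≠ 0 := pow_ne_zero _ (norm_ne_zero_iff.2 hx)
  have h3 := (Real.hasDerivAt_sqrt h2).comp_hasFDerivAt x
    (hasStrictFDerivAt_norm_sq x).hasFDerivAt
  have key : (fun y : E => Real.sqrt (‖y‖ ^ 2)) = fun y : E => ‖y‖ :=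
    funext fun y => Real.sqrt_sq (norm_nonneg y)
  have h3' : HasFDerivAt (fun y : E => ‖y‖)
      ((1 / (2 * Real.sqrt (‖x‖ ^ 2))) • 2 • (innerSL ℝ) x) x := by
    rw [← key]; exact h3
  convert h3' using 1
  ext v
  have hx' : (‖x‖ : ℝ) ≠ 0 := norm_ne_zero_iff.2 hx
  simp only [ContinuousLinearMap.smul_apply, ContinuousLinearMap.coe_smul', Pi.smul_apply,
    innerSL_apply_apply, Real.sqrt_sq (norm_nonneg x)]
  rw [real_inner_smul_left]
  simp only [smul_eq_mul]
  field_simp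
  ring

lemma phi_hasFDerivAt {G gg : ℝ → ℝ} (hG : ∀ r, HasDerivAt G (gg r) r)
    (hgg0 : gg 0 = 0) (hG0 : G 0 = 0) (x : E) :
    HasFDerivAt (fun y : E => G ‖y‖) (innerSL ℝ ((gg ‖x‖ / ‖x‖) • x)) x := by
  rcases eq_or_ne x 0 with rfl | hx
  · -- derivative is 0
    have hzero : (innerSL ℝ ((gg ‖(0 : E)‖ / ‖(0 : E)‖) • (0 : E))) = 0 := by
      simp
    rw [hzero, hasFDerivAt_iff_isLittleO_nhds_zero]
    have h1 : HasDerivAt G 0 0 := by simpa [hgg0] using hG 0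
    have h2 : (fun r : ℝ => G r) =o[𝓝 (0 : ℝ)] (fun r : ℝ => r) := by
      have := h1.hasFDerivAt.isLittleO
      simpa [hG0] using this
    have h3 : Tendsto (fun y : E => ‖y‖) (𝓝 0) (𝓝 (0 : ℝ)) := by
      simpa using (continuous_norm (E := E)).tendsto 0
    have h4 : (fun y : E => G ‖y‖) =o[𝓝 (0 : E)] (fun y : E => ‖y‖) := h2.comp_tendsto h3
    have h5 : (fun y : E => G ‖y‖) =o[𝓝 (0 : E)] (fun y : E => y) :=
      isLittleO_norm_right.mp h4
    simp only [zero_add, ContinuousLinearMap.zero_apply, sub_zero]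
    simpa [hG0] using h5
  · have h1 := (hG ‖x‖).comp_hasFDerivAt x (norm_hasFDerivAt hx)
    refine h1.congr_fderiv ?_
    ext v
    have hx' : (‖x‖ : ℝ) ≠ 0 := norm_ne_zero_iff.2 hx
    simp only [ContinuousLinearMap.smul_apply, innerSL_apply_apply, ContinuousLinearMap.coe_smul',
      Pi.smul_apply]
    rw [real_inner_smul_left, real_inner_smul_left]
    simp only [smul_eq_mul]
    field_simp


/-- A continuous function on ℝ, constant on `(-∞,0]` and converging at `+∞`, is bounded. -/
lemma bounded_of_continuous_tendsto {f : ℝ → ℝ} {L : ℝ} (hf : Continuous f)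
    (hlim : Tendsto f atTop (𝓝 L)) (hneg : ∀ r ≤ (0 : ℝ), f r = f 0) :
    ∃ M : ℝ, 0 < M ∧ ∀ r, |f r| ≤ M := by
  obtain ⟨R, hR⟩ := (eventually_atTop.1 (hlim.eventually (Metric.closedBall_mem_nhds L one_pos)))
  set R' : ℝ := max R 0 with hR'
  obtain ⟨C, hC⟩ := (isCompact_Icc (a := (0:ℝ)) (b := R')).exists_bound_of_continuousOn
    hf.continuousOn
  refine ⟨max C (|L| + 1) + 1, by positivity, fun r => ?_⟩
  rcases le_total r 0 with h | h
  · rw [hneg r h]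
    have h0 := hC 0 ⟨le_refl 0, le_max_right _ _⟩
    simp only [Real.norm_eq_abs] at h0
    linarith [le_max_left C (|L| + 1)]
  · rcases le_total r R' with h2 | h2
    · have := hC r ⟨h, h2⟩
      simp only [Real.norm_eq_abs] at this
      linarith [le_max_left C (|L| + 1)]
    · have hrR : R ≤ r := le_trans (le_max_left _ _) h2
      have hd := hR r hrR
      rw [Real.dist_eq] at hd
      have : |f r| ≤ |L| + 1 := by
        have h3 := abs_sub_abs_le_abs_sub (f r) L
        linarith
      linarith [le_max_right C (|L| + 1)]

/-- Lipschitz estimate for the primitive. -/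
lemma primitive_lipschitz {f : ℝ → ℝ} {M : ℝ} (hf : Continuous f) (hM : ∀ r, |f r| ≤ M)
    (a b : ℝ) : |(∫ t in (0:ℝ)..a, f t) - ∫ t in (0:ℝ)..b, f t| ≤ M * |a - b| := by
  have h1 : (∫ t in (0:ℝ)..a, f t) - ∫ t in (0:ℝ)..b, f t = ∫ t in b..a, f t :=
    intervalIntegral.integral_interval_sub_left (hf.intervalIntegrable _ _)
      (hf.intervalIntegrable _ _)
  rw [h1]
  have := intervalIntegral.norm_integral_le_of_norm_le_const
    (f := f) (a := b) (b := a) (C := M) (fun x _ => by simpa [Real.norm_eq_abs] using hM x)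
  simpa [Real.norm_eq_abs, abs_sub_comm a b] using this

/-- Asymptotic linear growth of the primitive. -/
lemma primitive_asymp {f : ℝ → ℝ} {L M : ℝ} (hf : Continuous f)
    (hM : ∀ r, |f r| ≤ M) (hL : 0 < L) (hlim : Tendsto f atTop (𝓝 L))
    {ε : ℝ} (hε : 0 < ε) :
    ∃ C : ℝ, 0 ≤ C ∧ ∀ r ≥ (0:ℝ), |(∫ t in (0:ℝ)..r, f t) - L * r| ≤ C + ε * r := by
  obtain ⟨R₀, hR₀⟩ := eventually_atTop.1
    (hlim.eventually (Metric.closedBall_mem_nhds L hε))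
  set R : ℝ := max R₀ 0 with hRdef
  have hR : ∀ t ≥ R, |f t - L| ≤ ε := by
    intro t ht
    have := hR₀ t (le_trans (le_max_left _ _) ht)
    rwa [Real.dist_eq] at this
  have hR0 : 0 ≤ R := le_max_right _ _
  have hM0 : 0 ≤ M := le_trans (abs_nonneg _) (hM 0)
  refine ⟨(M + L) * R, by positivity, fun r hr => ?_⟩
  set G : ℝ → ℝ := fun r => ∫ t in (0:ℝ)..r, f t with hGdef
  have hGbound : ∀ s ≥ (0:ℝ), |G s| ≤ M * s := by
    intro s hs
    have := primitive_lipschitz hf hM s 0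
    simpa [hGdef, intervalIntegral.integral_same, abs_of_nonneg hs] using this
  rcases le_total r R with h | h
  · have h1 : |G r| ≤ M * r := hGbound r hr
    have h2 : |G r - L * r| ≤ |G r| + L * r := by
      have h3 := abs_sub (G r) (L * r)
      rw [abs_of_nonneg (mul_nonneg hL.le hr)] at h3
      exact h3
    nlinarith [abs_nonneg (G r), hε.le]
  · -- r ≥ R
    have hsub : G r - G R = ∫ t in R..r, f t :=
      intervalIntegral.integral_interval_sub_left (hf.intervalIntegrable _ _)
        (hf.intervalIntegrable _ _)
    have hconst : (∫ t in R..r, (L : ℝ)) = L * (r - R) := by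
      simp [intervalIntegral.integral_const, smul_eq_mul, mul_comm]
    have hdiff : (∫ t in R..r, f t) - L * (r - R) = ∫ t in R..r, (f t - L) := by
      rw [intervalIntegral.integral_sub (hf.intervalIntegrable _ _)
        (intervalIntegrable_const), hconst]
    have hbnd : |∫ t in R..r, (f t - L)| ≤ ε * (r - R) := by
      have := intervalIntegral.norm_integral_le_of_norm_le_const
        (f := fun t => f t - L) (a := R) (b := r) (C := ε)
        (fun x hx => by
          have hxR : R ≤ x := by
            rcases Set.mem_uIoc.1 hx with h' | h'
            · exact h'.1.le
            · linarith [h'.1, h'.2]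
          simpa [Real.norm_eq_abs] using hR x hxR)
      simpa [Real.norm_eq_abs, abs_of_nonneg (by linarith : (0:ℝ) ≤ r - R)] using this
    have hGR : |G R| ≤ M * R := hGbound R hR0
    have expand : G r - L * r = (∫ t in R..r, (f t - L)) + (G R - L * R) := by
      have : G r = G R + ∫ t in R..r, f t := by rw [← hsub]; ring
      rw [this, ← hdiff]; ring
    rw [expand]
    calc |(∫ t in R..r, (f t - L)) + (G R - L * R)|
        ≤ |∫ t in R..r, (f t - L)| + |G R - L * R| := abs_add_le _ _
      _ ≤ ε * (r - R) + (|G R| + L * R) := by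
          have h4 : |G R - L * R| ≤ |G R| + |L * R| := abs_sub _ _
          rw [abs_of_nonneg (mul_nonneg hL.le hR0)] at h4
          linarith
      _ ≤ (M + L) * R + ε * r := by nlinarith [hε.le]

end RealAux



variable {n : ℕ}

lemma radialField_norm_le {gg : ℝ → ℝ} {M : ℝ} (hM : ∀ r, |gg r| ≤ M)
    (y : EuclideanSpace ℝ (Fin n)) : ‖radialField gg y‖ ≤ M := by
  rcases eq_or_ne y 0 with rfl | hy
  · simp only [radialField, smul_zero, norm_zero]
    exact le_trans (abs_nonneg _) (hM 0)
  · have hy' : ‖y‖ ≠ 0 := norm_ne_zero_iff.2 hy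
    rw [radialField, norm_smul, Real.norm_eq_abs, abs_div, abs_norm,
      div_mul_cancel₀ _ hy']
    exact hM _

lemma radialField_continuous {gg : ℝ → ℝ} (hc : Continuous gg) (h0 : gg 0 = 0) :
    Continuous (radialField (n := n) gg) := by
  rw [continuous_iff_continuousAt]
  intro y
  rcases eq_or_ne y 0 with rfl | hy
  · have h1 : radialField (n := n) gg 0 = 0 := by simp [radialField]
    rw [ContinuousAt, h1]
    apply squeeze_zero_norm (a := fun z : EuclideanSpace ℝ (Fin n) => |gg ‖z‖|)
    · intro z
      rcases eq_or_ne z 0 with rfl | hz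
      · simp [radialField, h0]
      · have hz' : ‖z‖ ≠ 0 := norm_ne_zero_iff.2 hz
        rw [radialField, norm_smul, Real.norm_eq_abs, abs_div, abs_norm,
          div_mul_cancel₀ _ hz']
    · have : Tendsto (fun z : EuclideanSpace ℝ (Fin n) => |gg ‖z‖|) (𝓝 0) (𝓝 |gg ‖(0:EuclideanSpace ℝ (Fin n))‖|) :=
        ((hc.comp continuous_norm).abs).tendsto 0
      simpa [h0] using this
  · have hy' : ‖y‖ ≠ 0 := norm_ne_zero_iff.2 hy
    exact (((hc.comp continuous_norm).continuousAt.div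
      continuous_norm.continuousAt hy').smul continuousAt_id)

lemma integral_diff_hasFDerivAt {gg G : ℝ → ℝ} {M : ℝ} (hgc : Continuous gg)
    (hg0 : gg 0 = 0) (hM : ∀ r, |gg r| ≤ M)
    (hGdef : G = fun r => ∫ t in (0:ℝ)..r, gg t)
    (ν : Measure (EuclideanSpace ℝ (Fin n))) [IsFiniteMeasure ν]
    (x₀ : EuclideanSpace ℝ (Fin n)) :
    HasFDerivAt (fun x => ∫ y, (G ‖x + y‖ - G ‖y‖) ∂ν)
      (innerSL ℝ (∫ y, radialField gg (x₀ + y) ∂ν)) x₀ := by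
  have hM0 : (0:ℝ) ≤ M := le_trans (abs_nonneg _) (hM 0)
  have hG : ∀ r, HasDerivAt G (gg r) r := by
    intro r
    rw [hGdef]
    exact (hgc.integral_hasStrictDerivAt 0 r).hasDerivAt
  have hG0 : G 0 = 0 := by rw [hGdef]; simp
  have hφd : ∀ x : EuclideanSpace ℝ (Fin n),
      HasFDerivAt (fun y : EuclideanSpace ℝ (Fin n) => G ‖y‖)
        (innerSL ℝ (radialField gg x)) x := fun x =>
    phi_hasFDerivAt hG hg0 hG0 x
  have hGc : Continuous G := by
    rw [continuous_iff_continuousAt]; exact fun r => (hG r).continuousAt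
  have hφc : Continuous fun y : EuclideanSpace ℝ (Fin n) => G ‖y‖ :=
    hGc.comp continuous_norm
  have hK : ∀ x y : EuclideanSpace ℝ (Fin n), |G ‖x + y‖ - G ‖y‖| ≤ M * ‖x‖ := by
    intro x y
    have h1 : |G ‖x + y‖ - G ‖y‖| ≤ M * |‖x + y‖ - ‖y‖| := by
      rw [hGdef]
      exact primitive_lipschitz hgc hM _ _
    have h2 : |‖x + y‖ - ‖y‖| ≤ ‖x‖ := by
      have := abs_norm_sub_norm_le (x + y) y
      simpa using this
    exact h1.trans (mul_le_mul_of_nonneg_left h2 hM0)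
  have hvcont := radialField_continuous (n := n) hgc hg0
  have hvmeas : AEStronglyMeasurable
      (fun y : EuclideanSpace ℝ (Fin n) => radialField gg (x₀ + y)) ν :=
    (hvcont.comp (continuous_const.add continuous_id)).aestronglyMeasurable
  have hvint : Integrable (fun y : EuclideanSpace ℝ (Fin n) => radialField gg (x₀ + y)) ν :=
    (integrable_const M).mono' hvmeas
      (Eventually.of_forall fun y => radialField_norm_le hM _)
  have key := hasFDerivAt_integral_of_dominated_of_fderiv_le
    (F := fun x y : EuclideanSpace ℝ (Fin n) => G ‖x + y‖ - G ‖y‖)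
    (F' := fun x y => innerSL ℝ (radialField gg (x + y)))
    (bound := fun _ => M) (μ := ν) (x₀ := x₀) (s := Metric.ball x₀ 1) (Metric.ball_mem_nhds x₀ one_pos)
    (Eventually.of_forall fun x =>
      ((hφc.comp (continuous_const.add continuous_id)).sub hφc).aestronglyMeasurable)
    ((integrable_const (M * ‖x₀‖)).mono'
      (((hφc.comp (continuous_const.add continuous_id)).sub hφc).aestronglyMeasurable)
      (Eventually.of_forall fun y => by simpa [Real.norm_eq_abs] using hK x₀ y))
    (((innerSL ℝ).continuous.comp
      (hvcont.comp (continuous_const.add continuous_id))).aestronglyMeasurable)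
    (Eventually.of_forall fun y x _ => by
      rw [innerSL_apply_norm]
      exact radialField_norm_le hM _)
    (integrable_const M)
    (Eventually.of_forall fun y x _ => by
      have h := ((hφd (x + y)).comp x ((hasFDerivAt_id x).add_const y)).sub_const (G ‖y‖)
      simpa [Function.comp] using h)
  rwa [ContinuousLinearMap.integral_comp_comm _ hvint] at key
variable {n : ℕ}

lemma tail_small (ν : Measure (EuclideanSpace ℝ (Fin n))) [IsFiniteMeasure ν]
    {η : ℝ} (hη : 0 < η) :
    ∃ r₀ : ℝ, 0 ≤ r₀ ∧ (ν (Metric.closedBall 0 r₀)ᶜ).toReal < η := by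
  have h₂ : ⋂ k : ℕ, (Metric.closedBall (0 : EuclideanSpace ℝ (Fin n)) (k : ℝ))ᶜ = ∅ := by
    ext y
    simp only [mem_iInter, mem_compl_iff, Metric.mem_closedBall, not_le,
      mem_empty_iff_false, iff_false, not_forall, not_lt]
    obtain ⟨k, hk⟩ := exists_nat_ge (dist y 0)
    exact ⟨k, hk⟩
  have hanti : Antitone (fun k : ℕ =>
      (Metric.closedBall (0 : EuclideanSpace ℝ (Fin n)) (k : ℝ))ᶜ) := fun k l hkl =>
    compl_subset_compl.2 (Metric.closedBall_subset_closedBall (by exact_mod_cast hkl))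
  have h1 := tendsto_measure_iInter_atTop (μ := ν)
    (fun k => measurableSet_closedBall.compl.nullMeasurableSet) hanti
    ⟨0, measure_ne_top ν _⟩
  rw [h₂, measure_empty] at h1
  have h2 : Tendsto (fun k : ℕ =>
      (ν ((Metric.closedBall (0 : EuclideanSpace ℝ (Fin n)) (k : ℝ))ᶜ)).toReal) atTop (𝓝 0) := by
    have := (ENNReal.tendsto_toReal ENNReal.zero_ne_top).comp h1
    exact this
  obtain ⟨k, hk⟩ := (h2.eventually_lt_const hη).exists
  exact ⟨(k : ℝ), Nat.cast_nonneg k, hk⟩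

lemma signed_univ (μ : SignedMeasure (EuclideanSpace ℝ (Fin n))) :
    μ Set.univ = (μ.toJordanDecomposition.posPart Set.univ).toReal -
      (μ.toJordanDecomposition.negPart Set.univ).toReal := by
  conv_lhs => rw [← μ.toSignedMeasure_toJordanDecomposition]
  rw [MeasureTheory.JordanDecomposition.toSignedMeasure, MeasureTheory.VectorMeasure.sub_apply,
    Measure.toSignedMeasure_apply_measurable MeasurableSet.univ,
    Measure.toSignedMeasure_apply_measurable MeasurableSet.univ]
  rfl



end CenterOfMassAux

set_option maxHeartbeats 1000000 in
theorem center_of_mass_exists_signed {n : ℕ} (hn : 1 ≤ n)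
    (g : ℝ → ℝ) (hg_cont : ContinuousOn g (Ici 0)) (hg0 : g 0 = 0)
    (ginf : ℝ) (hginf_pos : 0 < ginf) (hg_lim : Tendsto g atTop (𝓝 ginf))
    (μ : SignedMeasure (EuclideanSpace ℝ (Fin n)))
    (hμpos : 0 < μ Set.univ) :
    ∃ xc : EuclideanSpace ℝ (Fin n), VFieldSigned g μ xc = 0 := by
  classical
  set gt : ℝ → ℝ := fun r => g (max r 0) with hgt
  have hgtc : Continuous gt :=
    hg_cont.comp_continuous (continuous_id.max continuous_const)
      (fun r => mem_Ici.2 (le_max_right _ _))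
  have hgt_eq : ∀ r : ℝ, 0 ≤ r → gt r = g r := fun r hr => by
    simp only [hgt, max_eq_left hr]
  have hgt0 : gt 0 = 0 := by simp [hgt, hg0]
  have hgt_lim : Tendsto gt atTop (𝓝 ginf) := hg_lim.congr'
    (by filter_upwards [eventually_ge_atTop (0 : ℝ)] with r hr using (hgt_eq r hr).symm)
  have hgt_neg : ∀ r ≤ (0 : ℝ), gt r = gt 0 := fun r hr => by
    simp [hgt, max_eq_right hr]
  obtain ⟨M, hM0, hM⟩ := bounded_of_continuous_tendsto hgtc hgt_lim hgt_neg
  set G : ℝ → ℝ := fun r => ∫ t in (0 : ℝ)..r, gt t with hGdef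
  set ν₁ := μ.toJordanDecomposition.posPart with hν₁
  set ν₂ := μ.toJordanDecomposition.negPart with hν₂
  haveI : IsFiniteMeasure ν₁ := by rw [hν₁]; infer_instance
  haveI : IsFiniteMeasure ν₂ := by rw [hν₂]; infer_instance
  set Ψ : EuclideanSpace ℝ (Fin n) → ℝ := fun x =>
    (∫ y, (G ‖x + y‖ - G ‖y‖) ∂ν₁) - ∫ y, (G ‖x + y‖ - G ‖y‖) ∂ν₂ with hΨdef
  have hrad : ∀ z : EuclideanSpace ℝ (Fin n), radialField g z = radialField gt z := by
    intro z
    rw [radialField, radialField, hgt_eq _ (norm_nonneg z)]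
  have hVeq : ∀ x, VFieldSigned g μ x =
      (∫ y, radialField gt (x + y) ∂ν₁) - ∫ y, radialField gt (x + y) ∂ν₂ := by
    intro x
    rw [VFieldSigned]
    simp only [hrad, ← hν₁, ← hν₂]
  have hΨd : ∀ x, HasFDerivAt Ψ (innerSL ℝ (VFieldSigned g μ x)) x := by
    intro x
    have h1 := integral_diff_hasFDerivAt hgtc hgt0 hM hGdef ν₁ x
    have h2 := integral_diff_hasFDerivAt hgtc hgt0 hM hGdef ν₂ x
    have h3 := h1.sub h2
    rw [hVeq x, map_sub]
    exact h3
  have hΨcont : Continuous Ψ := continuous_iff_continuousAt.2 fun x => (hΨd x).continuousAt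
  -- lower (coercivity) bound
  have hGc : Continuous G := by
    rw [continuous_iff_continuousAt]
    exact fun r => ((hgtc.integral_hasStrictDerivAt 0 r).hasDerivAt.continuousAt)
  have hφc : Continuous fun y : EuclideanSpace ℝ (Fin n) => G ‖y‖ := hGc.comp continuous_norm
  have hK : ∀ x y : EuclideanSpace ℝ (Fin n), |G ‖x + y‖ - G ‖y‖| ≤ M * ‖x‖ := by
    intro x y
    have h1 : |G ‖x + y‖ - G ‖y‖| ≤ M * |‖x + y‖ - ‖y‖| := primitive_lipschitz hgtc hM _ _
    have h2 : |‖x + y‖ - ‖y‖| ≤ ‖x‖ := by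
      simpa using abs_norm_sub_norm_le (x + y) y
    exact h1.trans (mul_le_mul_of_nonneg_left h2 hM0.le)
  have hint₁ : ∀ x, Integrable (fun y => G ‖x + y‖ - G ‖y‖) ν₁ := fun x =>
    (integrable_const (M * ‖x‖)).mono'
      (((hφc.comp (continuous_const.add continuous_id)).sub hφc).aestronglyMeasurable)
      (Eventually.of_forall fun y => by simpa [Real.norm_eq_abs] using hK x y)
  have hint₂ : ∀ x, Integrable (fun y => G ‖x + y‖ - G ‖y‖) ν₂ := fun x =>
    (integrable_const (M * ‖x‖)).mono'
      (((hφc.comp (continuous_const.add continuous_id)).sub hφc).aestronglyMeasurable)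
      (Eventually.of_forall fun y => by simpa [Real.norm_eq_abs] using hK x y)
  set a : ℝ := (ν₁ Set.univ).toReal with hadef
  set b : ℝ := (ν₂ Set.univ).toReal with hbdef
  have ha0 : 0 ≤ a := ENNReal.toReal_nonneg
  have hb0 : 0 ≤ b := ENNReal.toReal_nonneg
  have hab : 0 < a - b := by
    have := signed_univ μ
    rw [← hν₁, ← hν₂, ← hadef, ← hbdef] at this
    rw [this] at hμpos
    exact hμpos
  set θ : ℝ := ginf * (a - b) / (4 * (a + b) + 1) with hθdef
  have hθ : 0 < θ := div_pos (mul_pos hginf_pos hab) (by linarith only [ha0, hb0])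
  obtain ⟨C₁, hC₁0, hC₁⟩ := primitive_asymp hgtc hM hginf_pos hgt_lim hθ
  set η : ℝ := ginf * (a - b) / (4 * (ginf + M)) with hηdef
  have hη : 0 < η := div_pos (mul_pos hginf_pos hab) (by linarith only [hginf_pos, hM0])
  obtain ⟨r₁, hr₁0, hr₁⟩ := tail_small ν₁ (half_pos hη)
  obtain ⟨r₂, hr₂0, hr₂⟩ := tail_small ν₂ (half_pos hη)
  set r₀ : ℝ := max r₁ r₂ with hr₀def
  have hr₀0 : 0 ≤ r₀ := le_trans hr₁0 (le_max_left _ _)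
  set B := Metric.closedBall (0 : EuclideanSpace ℝ (Fin n)) r₀ with hBdef
  have hB : MeasurableSet B := measurableSet_closedBall
  set A₁ : ℝ := (ν₁ B).toReal with hA₁def
  set A₁' : ℝ := (ν₁ Bᶜ).toReal with hA₁'def
  set A₂ : ℝ := (ν₂ B).toReal with hA₂def
  set A₂' : ℝ := (ν₂ Bᶜ).toReal with hA₂'def
  have hA₁0 : 0 ≤ A₁ := ENNReal.toReal_nonneg
  have hA₁'0 : 0 ≤ A₁' := ENNReal.toReal_nonneg
  have hA₂0 : 0 ≤ A₂ := ENNReal.toReal_nonneg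
  have hA₂'0 : 0 ≤ A₂' := ENNReal.toReal_nonneg
  have hsum₁ : A₁ + A₁' = a := by
    rw [hA₁def, hA₁'def, hadef, ← ENNReal.toReal_add (measure_ne_top _ _) (measure_ne_top _ _),
      measure_add_measure_compl hB]
  have hsum₂ : A₂ + A₂' = b := by
    rw [hA₂def, hA₂'def, hbdef, ← ENNReal.toReal_add (measure_ne_top _ _) (measure_ne_top _ _),
      measure_add_measure_compl hB]
  have htail : A₁' + A₂' ≤ η := by
    have h1 : A₁' ≤ (ν₁ (Metric.closedBall 0 r₁)ᶜ).toReal :=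
      ENNReal.toReal_mono (measure_ne_top _ _)
        (measure_mono (compl_subset_compl.2
          (Metric.closedBall_subset_closedBall (le_max_left _ _))))
    have h2 : A₂' ≤ (ν₂ (Metric.closedBall 0 r₂)ᶜ).toReal :=
      ENNReal.toReal_mono (measure_ne_top _ _)
        (measure_mono (compl_subset_compl.2
          (Metric.closedBall_subset_closedBall (le_max_right _ _))))
    linarith only [h1, h2, hr₁, hr₂]
  set Kp : ℝ := (2 * ginf + 2 * θ) * r₀ + 2 * C₁ with hKpdef
  set Km : ℝ := 2 * θ * r₀ + 2 * C₁ with hKmdef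
  have hKp0 : 0 ≤ Kp := by
    have h : 0 ≤ (2 * ginf + 2 * θ) * r₀ := mul_nonneg (by linarith only [hginf_pos, hθ]) hr₀0
    rw [hKpdef]
    linarith only [h, hC₁0]
  have hKm0 : 0 ≤ Km := by
    have h : 0 ≤ 2 * θ * r₀ := mul_nonneg (by linarith only [hθ]) hr₀0
    rw [hKmdef]
    linarith only [h, hC₁0]
  have hbound : ∀ x, ginf * (a - b) / 2 * ‖x‖ - (Kp * a + Km * b) ≤ Ψ x := by
    intro x
    have hlow : ∀ y ∈ B, (ginf - θ) * ‖x‖ - Kp ≤ G ‖x + y‖ - G ‖y‖ := by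
      intro y hy
      have hy' : ‖y‖ ≤ r₀ := by rwa [hBdef, Metric.mem_closedBall, dist_zero_right] at hy
      have h1 := abs_le.1 (hC₁ ‖x + y‖ (norm_nonneg _))
      have h2 := abs_le.1 (hC₁ ‖y‖ (norm_nonneg _))
      have t1 : ‖x‖ - ‖y‖ ≤ ‖x + y‖ := by
        have := norm_sub_le (x + y) y
        simpa using this
      have t2 : ‖x + y‖ ≤ ‖x‖ + ‖y‖ := norm_add_le x y
      have p1 : ginf * (‖x‖ - ‖y‖) ≤ ginf * ‖x + y‖ := mul_le_mul_of_nonneg_left t1 hginf_pos.le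
      have p2 : θ * ‖x + y‖ ≤ θ * (‖x‖ + ‖y‖) := mul_le_mul_of_nonneg_left t2 hθ.le
      have p3 : ginf * ‖y‖ ≤ ginf * r₀ := mul_le_mul_of_nonneg_left hy' hginf_pos.le
      have p4 : θ * ‖y‖ ≤ θ * r₀ := mul_le_mul_of_nonneg_left hy' hθ.le
      rw [hKpdef]
      linarith only [h1.1, h2.2, p1, p2, p3, p4]
    have hup : ∀ y ∈ B, G ‖x + y‖ - G ‖y‖ ≤ (ginf + θ) * ‖x‖ + Km := by
      intro y hy
      have hy' : ‖y‖ ≤ r₀ := by rwa [hBdef, Metric.mem_closedBall, dist_zero_right] at hy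
      have h1 := abs_le.1 (hC₁ ‖x + y‖ (norm_nonneg _))
      have h2 := abs_le.1 (hC₁ ‖y‖ (norm_nonneg _))
      have t2 : ‖x + y‖ ≤ ‖x‖ + ‖y‖ := norm_add_le x y
      have p5 : ginf * ‖x + y‖ ≤ ginf * (‖x‖ + ‖y‖) := mul_le_mul_of_nonneg_left t2 hginf_pos.le
      have p2 : θ * ‖x + y‖ ≤ θ * (‖x‖ + ‖y‖) := mul_le_mul_of_nonneg_left t2 hθ.le
      have p4 : θ * ‖y‖ ≤ θ * r₀ := mul_le_mul_of_nonneg_left hy' hθ.le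
      rw [hKmdef]
      linarith only [h1.2, h2.1, p5, p2, p4]
    have hi₁ := hint₁ x
    have hi₂ := hint₂ x
    have e₁ : (∫ y, (G ‖x + y‖ - G ‖y‖) ∂ν₁) =
        (∫ y in B, (G ‖x + y‖ - G ‖y‖) ∂ν₁) + ∫ y in Bᶜ, (G ‖x + y‖ - G ‖y‖) ∂ν₁ :=
      (integral_add_compl hB hi₁).symm
    have e₂ : (∫ y, (G ‖x + y‖ - G ‖y‖) ∂ν₂) =
        (∫ y in B, (G ‖x + y‖ - G ‖y‖) ∂ν₂) + ∫ y in Bᶜ, (G ‖x + y‖ - G ‖y‖) ∂ν₂ :=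
      (integral_add_compl hB hi₂).symm
    have l₁ : ((ginf - θ) * ‖x‖ - Kp) * A₁ ≤ ∫ y in B, (G ‖x + y‖ - G ‖y‖) ∂ν₁ :=
      setIntegral_ge_of_const_le_real hB (measure_ne_top _ _) hlow hi₁.integrableOn
    have l₂ : (-(M * ‖x‖)) * A₁' ≤ ∫ y in Bᶜ, (G ‖x + y‖ - G ‖y‖) ∂ν₁ :=
      setIntegral_ge_of_const_le_real hB.compl (measure_ne_top _ _)
        (fun y _ => (abs_le.1 (hK x y)).1) hi₁.integrableOn
    have u₁ : (∫ y in B, (G ‖x + y‖ - G ‖y‖) ∂ν₂) ≤ ((ginf + θ) * ‖x‖ + Km) * A₂ := by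
      have h := setIntegral_mono_on hi₂.integrableOn
        integrableOn_const hB hup
      rw [setIntegral_const, smul_eq_mul, show ν₂.real B = A₂ from rfl] at h
      linarith only [h]
    have u₂ : (∫ y in Bᶜ, (G ‖x + y‖ - G ‖y‖) ∂ν₂) ≤ (M * ‖x‖) * A₂' := by
      have h := setIntegral_mono_on hi₂.integrableOn
        integrableOn_const hB.compl
        (fun y _ => (abs_le.1 (hK x y)).2)
      rw [setIntegral_const, smul_eq_mul, show ν₂.real Bᶜ = A₂' from rfl] at h
      linarith only [h]
    -- coefficient bound
    have h4θ : 4 * θ * a + 4 * θ * b + θ = ginf * a - ginf * b := by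
      rw [hθdef]
      field_simp
    have hηeq : 4 * η * ginf + 4 * η * M = ginf * a - ginf * b := by
      rw [hηdef]
      field_simp
    have hprod : (ginf + M) * (A₁' + A₂') ≤ (ginf + M) * η :=
      mul_le_mul_of_nonneg_left htail (by linarith only [hginf_pos, hM0])
    have q1 : θ * A₁ ≤ θ * a := mul_le_mul_of_nonneg_left (by linarith only [hsum₁, hA₁'0]) hθ.le
    have q2 : θ * A₂ ≤ θ * b := mul_le_mul_of_nonneg_left (by linarith only [hsum₂, hA₂'0]) hθ.le
    have q3 : ginf * (A₁ + A₁') = ginf * a := by rw [hsum₁]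
    have q4 : ginf * (A₂ + A₂') = ginf * b := by rw [hsum₂]
    have hcoeff : ginf * (a - b) / 2 ≤ (ginf - θ) * A₁ - (ginf + θ) * A₂ - M * (A₁' + A₂') := by
      linarith only [q1, q2, q3, q4, hprod, h4θ, hηeq, hθ.le,
        mul_nonneg hginf_pos.le hA₂'0]
    have hmul := mul_le_mul_of_nonneg_right hcoeff (norm_nonneg x)
    have hKpA : Kp * A₁ ≤ Kp * a :=
      mul_le_mul_of_nonneg_left (by linarith only [hsum₁, hA₁'0]) hKp0
    have hKmA : Km * A₂ ≤ Km * b :=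
      mul_le_mul_of_nonneg_left (by linarith only [hsum₂, hA₂'0]) hKm0
    have hΨx : Ψ x = (∫ y, (G ‖x + y‖ - G ‖y‖) ∂ν₁) - ∫ y, (G ‖x + y‖ - G ‖y‖) ∂ν₂ := rfl
    have key1 : ginf * (a - b) / 2 * ‖x‖ - (Kp * A₁ + Km * A₂)
        ≤ (((ginf - θ) * ‖x‖ - Kp) * A₁ + (-(M * ‖x‖)) * A₁')
          - ((((ginf + θ) * ‖x‖ + Km) * A₂) + M * ‖x‖ * A₂') := by
      have h := hmul
      ring_nf at h ⊢
      linarith only [h]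
    have c1 := add_le_add l₁ l₂
    have c2 := add_le_add u₁ u₂
    have c3 := sub_le_sub c1 c2
    have h5 : ginf * (a - b) / 2 * ‖x‖ - (Kp * a + Km * b)
        ≤ ginf * (a - b) / 2 * ‖x‖ - (Kp * A₁ + Km * A₂) :=
      sub_le_sub_left (add_le_add hKpA hKmA) _
    rw [hΨx, e₁, e₂]
    exact le_trans (le_trans h5 key1) c3
  have hcoer : Tendsto Ψ (cocompact (EuclideanSpace ℝ (Fin n))) atTop := by
    have hcpos : 0 < ginf * (a - b) / 2 := by positivity
    have h1 : Tendsto (fun x : EuclideanSpace ℝ (Fin n) => ginf * (a - b) / 2 * ‖x‖)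
        (cocompact (EuclideanSpace ℝ (Fin n))) atTop :=
      tendsto_norm_cocompact_atTop.const_mul_atTop hcpos
    have h2 : Tendsto (fun x : EuclideanSpace ℝ (Fin n) =>
        ginf * (a - b) / 2 * ‖x‖ - (Kp * a + Km * b))
        (cocompact (EuclideanSpace ℝ (Fin n))) atTop := by
      simpa [sub_eq_add_neg] using tendsto_atTop_add_const_right _ (-(Kp * a + Km * b)) h1
    exact tendsto_atTop_mono hbound h2
  obtain ⟨xc, hxc⟩ := hΨcont.exists_forall_le hcoer
  have hmin : IsLocalMin Ψ xc := Filter.Eventually.of_forall hxc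
  have hzero := hmin.hasFDerivAt_eq_zero (hΨd xc)
  refine ⟨xc, ?_⟩
  have h2 := congrArg (fun L : EuclideanSpace ℝ (Fin n) →L[ℝ] ℝ =>
    L (VFieldSigned g μ xc)) hzero
  simp only [ContinuousLinearMap.zero_apply, innerSL_apply_apply] at h2
  exact inner_self_eq_zero.1 h2
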